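/- Let k be a positive integer and let θ ∈ ℂ be either transcendental over ℚ, or algebraic over ℚ of degree d ≥ k. If x₁,…,x_k, y₁,…,y_k are integers satisfying (x₁+θ)⋯(x_k+θ) = (y₁+θ)⋯(y_k+θ), then (y₁,…,y_k) is a permutation of (x₁,…,x_k), i.e., there exists a permutation σ of {1,…,k} with y_i = x_{σ(i)} for all i. -/

import Mathlib

open Polynomial

/-- If two tuples have the same multiset of values, one is a permutation of the other. -/
theorem exists_perm_of_multiset_map_eq {n : ℕ} {α : Type*} [LinearOrder α] {x y : Fin n → α}
    (h : Multiset.map x Finset.univ.val = Multiset.map y Finset.univ.val) :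
    ∃ σ : Equiv.Perm (Fin n), ∀ i, y i = x (σ i) := by
  have hperm : List.Perm (List.ofFn y) (List.ofFn x) := by
    rw [Fin.univ_val_map, Fin.univ_val_map] at h
    exact Quotient.exact h.symm
  have hx : Monotone (x ∘ Tuple.sort x) := Tuple.monotone_sort x
  have hy : Monotone (y ∘ Tuple.sort y) := Tuple.monotone_sort y
  have hsorted : x ∘ Tuple.sort x = y ∘ Tuple.sort y := by
    apply List.ofFn_injective
    refine List.Perm.eq_of_sortedLE hx.sortedLE_ofFn hy.sortedLE_ofFn ?_
    exact ((Tuple.sort x).ofFn_comp_perm x).trans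
      (hperm.symm.trans ((Tuple.sort y).ofFn_comp_perm y).symm)
  refine ⟨(Tuple.sort y).symm.trans (Tuple.sort x), fun i => ?_⟩
  have := congrFun hsorted ((Tuple.sort y).symm i)
  simpa using this.symm

/-- If `θ ∈ ℂ` is transcendental over `ℚ`, or algebraic over `ℚ` of degree `d ≥ k`, then any
integral solution of `(x₁+θ)⋯(x_k+θ) = (y₁+θ)⋯(y_k+θ)` is diagonal: `y` is a permutation
of `x`. -/
theorem solutions_are_diagonal_large_degree (k : ℕ) (hk : 0 < k) (θ : ℂ)
    (hθ : Transcendental ℚ θ ∨ (IsAlgebraic ℚ θ ∧ k ≤ (minpoly ℚ θ).natDegree))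
    (x y : Fin k → ℤ)
    (h : ∏ i, ((x i : ℂ) + θ) = ∏ i, ((y i : ℂ) + θ)) :
    ∃ σ : Equiv.Perm (Fin k), ∀ i, y i = x (σ i) := by
  set p : ℚ[X] := ∏ i, (X + C (x i : ℚ)) with hp
  set q : ℚ[X] := ∏ i, (X + C (y i : ℚ)) with hq
  have hpm : p.Monic := monic_prod_of_monic _ _ fun i _ => monic_X_add_C _
  have hqm : q.Monic := monic_prod_of_monic _ _ fun i _ => monic_X_add_C _
  have hpdeg : p.natDegree = k := by
    rw [hp, natDegree_prod _ _ fun i _ => (monic_X_add_C _).ne_zero]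
    simp only [natDegree_X_add_C]
    simp
  have hqdeg : q.natDegree = k := by
    rw [hq, natDegree_prod _ _ fun i _ => (monic_X_add_C _).ne_zero]
    simp only [natDegree_X_add_C]
    simp
  have haev : Polynomial.aeval θ (p - q) = 0 := by
    have : Polynomial.aeval θ p = Polynomial.aeval θ q := by
      rw [hp, hq, map_prod, map_prod]
      simp only [map_add, aeval_X, aeval_C]
      simpa [add_comm] using h
    rw [map_sub, this, sub_self]
  have hpq : p = q := by
    by_contra hne
    have hsub : p - q ≠ 0 := sub_ne_zero.mpr hne
    have hdlt : (p - q).natDegree < k := by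
      have : (p - q).degree < p.degree := by
        refine degree_sub_lt ?_ hpm.ne_zero ?_
        · rw [degree_eq_natDegree hpm.ne_zero, degree_eq_natDegree hqm.ne_zero, hpdeg, hqdeg]
        · rw [hpm.leadingCoeff, hqm.leadingCoeff]
      have := Polynomial.natDegree_lt_natDegree hsub this
      omega
    rcases hθ with ht | ⟨ha, hd⟩
    · exact ht ⟨p - q, hsub, haev⟩
    · have hdvd := minpoly.dvd ℚ θ haev
      have := Polynomial.natDegree_le_of_dvd hdvd hsub
      omega
  -- equal polynomials ⇒ equal root multisets
  have hroots : Multiset.map (fun i => -(x i : ℚ)) Finset.univ.val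
      = Multiset.map (fun i => -(y i : ℚ)) Finset.univ.val := by
    have hx' : p = ((Finset.univ.val.map (fun i => -(x i : ℚ))).map fun a => X - C a).prod := by
      rw [hp, Finset.prod_eq_multiset_prod, Multiset.map_map]
      simp [sub_neg_eq_add]
    have hy' : q = ((Finset.univ.val.map (fun i => -(y i : ℚ))).map fun a => X - C a).prod := by
      rw [hq, Finset.prod_eq_multiset_prod, Multiset.map_map]
      simp [sub_neg_eq_add]
    have := congrArg Polynomial.roots (hx'.symm.trans (hpq.trans hy'))
    rwa [roots_multiset_prod_X_sub_C, roots_multiset_prod_X_sub_C] at this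
  have hmult : Multiset.map x Finset.univ.val = Multiset.map y Finset.univ.val := by
    have hinj : Function.Injective (fun z : ℤ => -(z : ℚ)) := by
      intro a b hab; simpa using hab
    apply Multiset.map_injective hinj
    rw [Multiset.map_map, Multiset.map_map]
    exact hroots
  exact exists_perm_of_multiset_map_eq hmult
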